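/- Let V be a real vector space, Y ⊆ X ⊆ V, and 𝔸 a nonzero additive subgroup of (ℝ,+). Then Y is a positive weak 𝔸-face of X if and only if the following three conditions all hold: (i) Y is a weak 𝔸-face of X; (ii) Y is a weak 𝔸-face of X ∪ {0}; and (iii) there is no nonzero f ∈ Fin(Y,𝔸₊) with ℓ⃗(f) = 0, i.e., 0 is not a nontrivial 𝔸₊-linear combination of elements of Y. -/

import Mathlib

set_option linter.unusedSectionVars false


open Finsupp

/-- `R₊ := R ∩ [0,∞)`. -/
def Rplus (R : Set ℝ) : Set ℝ := R ∩ Set.Ici 0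

/-- `ℓ(f) := Σ_v f(v)`. -/
noncomputable def ell {V : Type*} [AddCommGroup V] [Module ℝ V] (f : V →₀ ℝ) : ℝ :=
  f.sum fun _ r => r

/-- `ℓ⃗(f) := Σ_v f(v) • v`. -/
noncomputable def vell {V : Type*} [AddCommGroup V] [Module ℝ V] (f : V →₀ ℝ) : V :=
  f.sum fun v r => r • v

/-- `f ∈ Fin(X,R)`: finitely supported, support in `X`, values in `R ∪ {0}`. -/
def IsFinSupp {V : Type*} [AddCommGroup V] [Module ℝ V] (X : Set V) (R : Set ℝ)
    (f : V →₀ ℝ) : Prop :=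
  ↑f.support ⊆ X ∧ ∀ v, f v ∈ R ∪ {0}

/-- `Y` is a weak `R`-face of `X`. -/
def IsWeakFace {V : Type*} [AddCommGroup V] [Module ℝ V] (X Y : Set V) (R : Set ℝ) : Prop :=
  ∀ f g : V →₀ ℝ, IsFinSupp X (Rplus R) f → IsFinSupp Y (Rplus R) g →
    ell f = ell g → 0 < ell g → vell f = vell g → ↑f.support ⊆ Y

/-- `Y` is a positive weak `R`-face of `X`. -/
def IsPosWeakFace {V : Type*} [AddCommGroup V] [Module ℝ V] (X Y : Set V) (R : Set ℝ) : Prop :=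
  ∀ f g : V →₀ ℝ, IsFinSupp X (Rplus R) f → IsFinSupp Y (Rplus R) g →
    vell f = vell g → ell g ≤ ell f ∧ (ell g = ell f ↔ ↑f.support ⊆ Y)

/-- `Y` is `(R',R)`-closed in `X`. -/
def IsRClosed {V : Type*} [AddCommGroup V] [Module ℝ V] (X Y : Set V) (R' R : Set ℝ) : Prop :=
  ∀ f g : V →₀ ℝ, IsFinSupp X R f → IsFinSupp Y R g →
    ell f = ell g → ell f ∈ R' → ell f ≠ 0 → vell f = vell g → ↑f.support ⊆ Y

/-- The maximizer set `X(φ)`. -/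
def maximizer {V : Type*} [AddCommGroup V] [Module ℝ V] (X : Set V) (φ : V →ₗ[ℝ] ℝ) : Set V :=
  {x | x ∈ X ∧ ∀ x' ∈ X, φ x' ≤ φ x}

section Aux
variable {V : Type*} [AddCommGroup V] [Module ℝ V]

lemma ell_add (f g : V →₀ ℝ) : ell (f + g) = ell f + ell g :=
  Finsupp.sum_add_index' (fun _ => rfl) (fun _ _ _ => rfl)

lemma vell_add (f g : V →₀ ℝ) : vell (f + g) = vell f + vell g :=
  Finsupp.sum_add_index' (fun v => zero_smul ℝ v) (fun v r s => add_smul r s v)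

lemma ell_single (v : V) (r : ℝ) : ell (Finsupp.single v r) = r :=
  Finsupp.sum_single_index rfl

lemma vell_single (v : V) (r : ℝ) : vell (Finsupp.single v r) = r • v :=
  Finsupp.sum_single_index (zero_smul ℝ v)

lemma ell_zero : ell (0 : V →₀ ℝ) = 0 := Finsupp.sum_zero_index

lemma vell_zero : vell (0 : V →₀ ℝ) = 0 := Finsupp.sum_zero_index

lemma val_nonneg {R : Set ℝ} {f : V →₀ ℝ} (h : ∀ v, f v ∈ Rplus R ∪ {0}) (v : V) :
    0 ≤ f v := by
  rcases h v with h | h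
  · exact h.2
  · simp only [Set.mem_singleton_iff] at h; simp [h]

lemma ell_nonneg {R : Set ℝ} {f : V →₀ ℝ} (h : ∀ v, f v ∈ Rplus R ∪ {0}) :
    0 ≤ ell f := Finset.sum_nonneg fun v _ => val_nonneg h v

lemma ell_pos {R : Set ℝ} {f : V →₀ ℝ} (h : ∀ v, f v ∈ Rplus R ∪ {0}) (hf : f ≠ 0) :
    0 < ell f := by
  obtain ⟨v, hv⟩ := Finsupp.ne_iff.mp hf
  simp only [Finsupp.coe_zero, Pi.zero_apply] at hv
  exact Finset.sum_pos' (fun w _ => val_nonneg h w)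
    ⟨v, Finsupp.mem_support_iff.mpr hv, lt_of_le_of_ne (val_nonneg h v) (Ne.symm hv)⟩

lemma eq_zero_of_ell_eq_zero {R : Set ℝ} {f : V →₀ ℝ} (h : ∀ v, f v ∈ Rplus R ∪ {0})
    (h0 : ell f = 0) : f = 0 := by
  by_contra hf
  exact absurd h0 (ne_of_gt (ell_pos h hf))

lemma ell_mem {𝔸 : AddSubgroup ℝ} {f : V →₀ ℝ} (h : ∀ v, f v ∈ Rplus (𝔸 : Set ℝ) ∪ {0}) :
    ell f ∈ 𝔸 := by
  apply AddSubgroup.sum_mem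
  intro v _
  rcases h v with hv | hv
  · exact hv.1
  · simp only [Set.mem_singleton_iff] at hv
    rw [hv]; exact zero_mem 𝔸

end Aux

theorem statement8' {V : Type*} [AddCommGroup V] [Module ℝ V]
    (X Y : Set V) (hYX : Y ⊆ X) (𝔸 : AddSubgroup ℝ) (h𝔸 : 𝔸 ≠ ⊥) :
    (∀ f g : V →₀ ℝ, IsFinSupp X (Rplus (𝔸:Set ℝ)) f → IsFinSupp Y (Rplus (𝔸:Set ℝ)) g →
      vell f = vell g → ell g ≤ ell f ∧ (ell g = ell f ↔ ↑f.support ⊆ Y)) ↔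
      (∀ f g : V →₀ ℝ, IsFinSupp X (Rplus (𝔸:Set ℝ)) f → IsFinSupp Y (Rplus (𝔸:Set ℝ)) g →
        ell f = ell g → 0 < ell g → vell f = vell g → ↑f.support ⊆ Y) ∧
      (∀ f g : V →₀ ℝ, IsFinSupp (X ∪ {0}) (Rplus (𝔸:Set ℝ)) f → IsFinSupp Y (Rplus (𝔸:Set ℝ)) g →
        ell f = ell g → 0 < ell g → vell f = vell g → ↑f.support ⊆ Y) ∧
        ¬∃ f : V →₀ ℝ, f ≠ 0 ∧ IsFinSupp Y (Rplus (𝔸 : Set ℝ)) f ∧ vell f = 0 := by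
  classical
  constructor
  · intro hP
    refine ⟨?_, ?_, ?_⟩
    · intro f g hf hg hl _ hv
      exact ((hP f g hf hg hv).2).mp hl.symm
    · intro f g hf hg hl hpos hv
      set f' := f.erase 0 with hf'def
      have hsupp' : f'.support = f.support.erase 0 := Finsupp.support_erase
      have hf' : IsFinSupp X (Rplus ↑𝔸) f' := by
        constructor
        · intro v hvmem
          rw [hsupp'] at hvmem
          simp only [Finset.coe_erase, Set.mem_diff, Set.mem_singleton_iff] at hvmem
          rcases hf.1 hvmem.1 with h | h
          · exact h
          · exact absurd h hvmem.2
        · intro v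
          by_cases h0 : v = 0
          · subst h0; rw [hf'def, Finsupp.erase_same]; exact Or.inr rfl
          · rw [hf'def, Finsupp.erase_ne h0]; exact hf.2 v
      have hdecomp : f' + Finsupp.single 0 (f 0) = f := Finsupp.erase_add_single 0 f
      have hv' : vell f' = vell f := by
        conv_rhs => rw [← hdecomp]
        rw [vell_add, vell_single, smul_zero, add_zero]
      have hl' : ell f' + f 0 = ell f := by
        conv_rhs => rw [← hdecomp]
        rw [ell_add, ell_single]
      have key := hP f' g hf' hg (hv'.trans hv)
      have h00 : 0 ≤ f 0 := val_nonneg hf.2 0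
      have hf0 : f 0 = 0 := by
        have := key.1
        linarith
      have hfe : f' = f := by
        rw [hf'def]
        exact Finsupp.erase_of_notMem_support (fun h => Finsupp.mem_support_iff.mp h hf0)
      have : (↑f'.support : Set V) ⊆ Y := key.2.mp (by linarith [key.1, hl'])
      rwa [hfe] at this
    · rintro ⟨f, hf0, hf, hv0⟩
      have h0X : IsFinSupp X (Rplus ↑𝔸) (0 : V →₀ ℝ) := by
        constructor
        · simp
        · intro v; exact Or.inr rfl
      have := (hP 0 f h0X hf (by rw [vell_zero, hv0])).1
      rw [ell_zero] at this
      exact absurd this (not_le.mpr (ell_pos hf.2 hf0))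
  · rintro ⟨h1, h2, h3⟩
    have hC : ∀ f g : V →₀ ℝ, IsFinSupp X (Rplus ↑𝔸) f → IsFinSupp Y (Rplus ↑𝔸) g →
        vell f = vell g → ell g ≤ ell f := by
      intro f g hf hg hv
      by_contra hlt
      push_neg at hlt
      have hgpos : 0 < ell g := lt_of_le_of_lt (ell_nonneg hf.2) hlt
      set c := ell g - ell f with hc
      have hcpos : 0 < c := sub_pos.mpr hlt
      have hcA : c ∈ 𝔸 := 𝔸.sub_mem (ell_mem hg.2) (ell_mem hf.2)
      set f' := f + Finsupp.single 0 c with hf'def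
      have hf'0 : f' 0 = f 0 + c := by
        rw [hf'def]; simp
      have hf' : IsFinSupp (X ∪ {0}) (Rplus ↑𝔸) f' := by
        constructor
        · intro v hvmem
          have : v ∈ f.support ∪ (Finsupp.single (0:V) c).support :=
            Finsupp.support_add (by exact_mod_cast hvmem)
          rcases Finset.mem_union.mp this with h | h
          · exact Or.inl (hf.1 h)
          · have := Finsupp.support_single_subset h
            simp only [Finset.mem_singleton] at this
            exact Or.inr this
        · intro v
          by_cases h0 : v = 0
          · subst h0
            rw [hf'0]
            left
            have hfA : f 0 ∈ 𝔸 := by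
              rcases hf.2 0 with h | h
              · exact h.1
              · simp only [Set.mem_singleton_iff] at h; rw [h]; exact zero_mem 𝔸
            exact ⟨𝔸.add_mem hfA hcA, by
              have := val_nonneg hf.2 0
              simp only [Set.mem_Ici]; linarith⟩
          · have : f' v = f v := by
              rw [hf'def]
              simp [Finsupp.single_apply, Ne.symm h0]
            rw [this]; exact hf.2 v
      have hell' : ell f' = ell g := by
        rw [hf'def, ell_add, ell_single, hc]; ring
      have hvell' : vell f' = vell g := by
        rw [hf'def, vell_add, vell_single, smul_zero, add_zero]; exact hv
      have hsub := h2 f' g hf' hg hell' hgpos hvell'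
      have h0Y : (0 : V) ∈ Y := by
        apply hsub
        simp only [Finset.coe_sort_coe, Finset.mem_coe, Finsupp.mem_support_iff]
        rw [hf'0]
        have := val_nonneg hf.2 0
        positivity
      obtain ⟨a, haA, ha0⟩ : ∃ a ∈ 𝔸, 0 < a := by
        by_contra hcon
        push_neg at hcon
        obtain ⟨a, haA, hane⟩ : ∃ a ∈ 𝔸, a ≠ 0 := by
          by_contra hcon2
          push_neg at hcon2
          exact h𝔸 ((AddSubgroup.eq_bot_iff_forall 𝔸).mpr hcon2)
        rcases lt_or_gt_of_ne hane with h | h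
        · exact absurd (hcon (-a) (𝔸.neg_mem haA)) (not_le.mpr (by linarith))
        · exact absurd (hcon a haA) (not_le.mpr h)
      apply h3
      refine ⟨Finsupp.single 0 a, ?_, ⟨?_, ?_⟩, ?_⟩
      · exact by rw [Ne, Finsupp.single_eq_zero]; exact ne_of_gt ha0
      · intro v hvmem
        have h' : v ∈ (Finsupp.single (0:V) a).support := Finset.mem_coe.mp hvmem
        have := Finsupp.support_single_subset h'
        simp only [Finset.mem_singleton] at this
        rw [this]; exact h0Y
      · intro v
        by_cases h0 : v = 0
        · subst h0; rw [Finsupp.single_eq_same]; exact Or.inl ⟨haA, le_of_lt ha0⟩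
        · rw [Finsupp.single_eq_of_ne' (Ne.symm h0)]; exact Or.inr rfl
      · rw [vell_single, smul_zero]
    intro f g hf hg hv
    refine ⟨hC f g hf hg hv, ?_, ?_⟩
    · intro heq
      by_cases hpos : 0 < ell g
      · exact h1 f g hf hg heq.symm hpos hv
      · have hg0 : ell g = 0 := le_antisymm (not_lt.mp hpos) (ell_nonneg hg.2)
        have hf0 : f = 0 := eq_zero_of_ell_eq_zero hf.2 (by linarith)
        rw [hf0]; simp
    · intro hsubY
      have hle2 := hC g f ⟨Set.Subset.trans hg.1 hYX, hg.2⟩ ⟨hsubY, hf.2⟩ hv.symm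
      linarith [hC f g hf hg hv]

/-- `Y` is a positive weak `𝔸`-face of `X` iff (i) `Y` is a weak `𝔸`-face
of `X`; (ii) `Y` is a weak `𝔸`-face of `X ∪ {0}`; and (iii) `0` is not a nontrivial
`𝔸₊`-linear combination of elements of `Y`. -/
theorem statement8 {V : Type*} [AddCommGroup V] [Module ℝ V]
    (X Y : Set V) (hYX : Y ⊆ X) (𝔸 : AddSubgroup ℝ) (h𝔸 : 𝔸 ≠ ⊥) :
    IsPosWeakFace X Y (𝔸 : Set ℝ) ↔
      IsWeakFace X Y (𝔸 : Set ℝ) ∧ IsWeakFace (X ∪ {0}) Y (𝔸 : Set ℝ) ∧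
        ¬∃ f : V →₀ ℝ, f ≠ 0 ∧ IsFinSupp Y (Rplus (𝔸 : Set ℝ)) f ∧ vell f = 0 := by
  exact statement8' X Y hYX 𝔸 h𝔸
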